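/- Let ρ be a probability measure on Y, let t ∈ [0,1), and let C ⊆ Y be a nonempty set with ρ(C) > t. Then max_{a∈A} min_{y∈C} u(a,y) ≤ θ_ρ(t). In words: no prediction set whose conditional coverage exceeds t can have max-min value larger than the best (1−t)-quantile utility θ_ρ(t). -/
import Mathlib


open MeasureTheory

/-- The `α`-quantile of `f` under `ρ`: `inf {z | ρ{y : f y ≤ z} ≥ α}`. -/
noncomputable def quantileRA {Y : Type*} [Fintype Y] [MeasurableSpace Y]
    (ρ : Measure Y) (f : Y → ℝ) (α : ℝ) : ℝ :=
  sInf {z : ℝ | ENNReal.ofReal α ≤ ρ {y | f y ≤ z}}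

/-- No prediction set whose conditional coverage exceeds `t` can have max-min
value larger than the best `(1-t)`-quantile utility `θ_ρ(t) = max_a quantile_{1-t}(u(a,·); ρ)`. -/
theorem stmt_6 {Y A : Type*} [Fintype Y] [Nonempty Y] [Fintype A] [Nonempty A]
    [MeasurableSpace Y] [MeasurableSingletonClass Y]
    (u : A → Y → ℝ)
    (ρ : Measure Y) [IsProbabilityMeasure ρ]
    (t : ℝ) (ht0 : 0 ≤ t) (ht1 : t < 1)
    (C : Finset Y) (hC : C.Nonempty)
    (hcov : ENNReal.ofReal t < ρ ↑C) :
    Finset.univ.sup' Finset.univ_nonempty (fun a => C.inf' hC (u a)) ≤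
      Finset.univ.sup' Finset.univ_nonempty (fun a => quantileRA ρ (u a) (1 - t)) := by
  apply Finset.sup'_le
  intro a _
  refine le_trans ?_ (Finset.le_sup' (fun a => quantileRA ρ (u a) (1 - t)) (Finset.mem_univ a))
  unfold quantileRA
  apply le_csInf
  · refine ⟨Finset.univ.sup' Finset.univ_nonempty (u a), ?_⟩
    have : {y | u a y ≤ Finset.univ.sup' Finset.univ_nonempty (u a)} = Set.univ := by
      ext y; simp only [Set.mem_setOf_eq, Set.mem_univ, iff_true]
      exact Finset.le_sup' (u a) (Finset.mem_univ y)
    simp only [Set.mem_setOf_eq, this, measure_univ]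
    exact ENNReal.ofReal_le_one.mpr (by linarith)
  · intro z hz
    by_contra hlt
    push_neg at hlt
    have hsub : {y | u a y ≤ z} ⊆ (↑C : Set Y)ᶜ := by
      intro y hy hyC
      have := Finset.inf'_le (u a) hyC
      have : u a y ≤ z := hy
      have hzlt : z < u a y := lt_of_lt_of_le hlt (Finset.inf'_le (u a) hyC)
      linarith
    have hdisj : Disjoint {y | u a y ≤ z} (↑C : Set Y) :=
      Set.disjoint_left.mpr fun y hy hyC => hsub hy hyC
    have hmeas : MeasurableSet (↑C : Set Y) := (Set.Finite.ofFinset C fun _ => Iff.rfl).measurableSet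
    have hsum : ρ {y | u a y ≤ z} + ρ ↑C ≤ 1 := by
      rw [← measure_union hdisj hmeas]
      exact (measure_mono (Set.subset_univ _)).trans_eq measure_univ
    have h2 : ENNReal.ofReal (1 - t) + ρ ↑C ≤ 1 := le_trans (add_le_add hz le_rfl) hsum
    have h3 : ENNReal.ofReal (1 - t) + ρ ↑C > ENNReal.ofReal (1 - t) + ENNReal.ofReal t :=
      ENNReal.add_lt_add_left ENNReal.ofReal_ne_top hcov
    have : (1 : ENNReal) < 1 := lt_of_lt_of_le (by simpa [← ENNReal.ofReal_add (by linarith : (0:ℝ) ≤ 1 - t) ht0] using h3) h2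
    exact lt_irrefl _ this
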